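/- arXiv:1212.3832 — 4 statements merged into one kernel-verified Lean document; each statement's English description precedes it below -/
import Mathlib

section
/- Let V be a separable real Banach space and let ξ be a σ-finite Borel measure on V satisfying: (i) ξ({v ∈ V : ‖v‖ > 1}) < ∞; (ii) ∫_{‖v‖≤1} ⟨v,v*⟩² ξ(dv) < ∞ for every v* ∈ V*; (iii) for every α > 0 there exists a Borel probability measure θ_α on V whose characteristic function satisfies ∫_V e^{i⟨v,v*⟩} θ_α(dv) = exp(−∫_V (1 − cos(α⁻¹⟨v,v*⟩)) (ξ + ξ⁻)(dv)) for all v* ∈ V*, where ξ⁻(A) := ξ(−A). Define Δ_ξ(v*) := ∫_V ⟨v,v*⟩ (1_{B_V}(v) − 1_{[−1,1]}(⟨v,v*⟩)) ξ(dv). Then for every sequence (vₙ*) in V* converging to 0 in the weak* topology one has Δ_ξ(vₙ*) → 0. -/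
open MeasureTheory Filter

lemma auxInt (V : Type*) [NormedAddCommGroup V] [NormedSpace ℝ V]
    [MeasurableSpace V] [BorelSpace V]
    (ξ : Measure V)
    (h1 : ξ {v : V | 1 < ‖v‖} < ⊤)
    (h2 : ∀ w : V →L[ℝ] ℝ, IntegrableOn (fun v => (w v) ^ 2) {v : V | ‖v‖ ≤ 1} ξ)
    (a : ℝ) (w : V →L[ℝ] ℝ) :
    Integrable (fun v => 1 - Real.cos (a * w v)) ξ := by
  have hcont : Continuous (fun v : V => 1 - Real.cos (a * w v)) := by
    continuity
  have hmeas : AEStronglyMeasurable (fun v : V => 1 - Real.cos (a * w v)) ξ :=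
    hcont.aestronglyMeasurable
  rw [← integrableOn_univ, ← Set.union_compl_self {v : V | ‖v‖ ≤ 1}]
  apply IntegrableOn.union
  · apply Integrable.mono (((h2 w).const_mul (a ^ 2 / 2))) hmeas.restrict
    filter_upwards with v
    have h1c : Real.cos (a * w v) ≤ 1 := Real.cos_le_one _
    have h2c : 1 - (a * w v) ^ 2 / 2 ≤ Real.cos (a * w v) :=
      Real.one_sub_sq_div_two_le_cos
    rw [Real.norm_eq_abs, Real.norm_eq_abs, abs_of_nonneg (by linarith)]
    rw [abs_of_nonneg (by positivity)]
    nlinarith [sq_nonneg (w v), sq_nonneg a, sq_nonneg (a * w v)]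
  · have hs : {v : V | ‖v‖ ≤ 1}ᶜ = {v : V | 1 < ‖v‖} := by
      ext v; simp [not_le]
    rw [hs]
    apply Measure.integrableOn_of_bounded (M := 2) h1.ne hmeas
    filter_upwards with v
    have h1c : Real.cos (a * w v) ≤ 1 := Real.cos_le_one _
    have h2c : -1 ≤ Real.cos (a * w v) := Real.neg_one_le_cos _
    rw [Real.norm_eq_abs, abs_of_nonneg (by linarith)]
    linarith


set_option maxHeartbeats 1000000 in
/-- Weak*-sequential continuity at 0 of the correction term `Δ_ξ` between the classical
and the cylindrical Lévy–Khintchine formula, for a σ-finite Borel measure `ξ` enjoying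
the properties of a Lévy measure on a separable Banach space. -/
theorem stmt2
    (V : Type*) [NormedAddCommGroup V] [NormedSpace ℝ V] [CompleteSpace V]
    [TopologicalSpace.SeparableSpace V] [MeasurableSpace V] [BorelSpace V]
    (ξ : Measure V) [SigmaFinite ξ]
    (h1 : ξ {v : V | 1 < ‖v‖} < ⊤)
    (h2 : ∀ w : V →L[ℝ] ℝ, IntegrableOn (fun v => (w v) ^ 2) {v : V | ‖v‖ ≤ 1} ξ)
    (h3 : ∀ α : ℝ, 0 < α → ∃ θ : Measure V, IsProbabilityMeasure θ ∧
      ∀ w : V →L[ℝ] ℝ,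
        (∫ v, Complex.exp (Complex.I * (w v : ℂ)) ∂θ)
          = Complex.exp (-((∫ v, (1 - Real.cos (α⁻¹ * w v))
              ∂(ξ + ξ.map (fun v => -v)) : ℝ) : ℂ)))
    (vs : ℕ → V →L[ℝ] ℝ)
    (hvs : ∀ v : V, Tendsto (fun n => vs n v) atTop (nhds 0)) :
    Tendsto
      (fun n => ∫ v, (vs n v) *
        (Set.indicator {v : V | ‖v‖ ≤ 1} (fun _ => (1 : ℝ)) v
          - Set.indicator {β : ℝ | |β| ≤ 1} (fun _ => (1 : ℝ)) (vs n v)) ∂ξ)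
      atTop (nhds 0) := by
  -- uniform bound by Banach–Steinhaus
  obtain ⟨C, hC⟩ : ∃ C, ∀ n, ‖vs n‖ ≤ C := by
    apply banach_steinhaus
    intro v
    obtain ⟨M, hM⟩ := (hvs v).norm.bddAbove_range
    exact ⟨M, fun n => hM ⟨n, rfl⟩⟩
  have hC0 : 0 ≤ C := le_trans (norm_nonneg _) (hC 0)
  have hvsC : ∀ n (v : V), ‖v‖ ≤ 1 → |vs n v| ≤ C := by
    intro n v hv
    calc |vs n v| ≤ ‖vs n‖ * ‖v‖ := (vs n).le_opNorm v
    _ ≤ C * 1 := by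
        apply mul_le_mul (hC n) hv (norm_nonneg v) hC0
    _ = C := mul_one C
  set α : ℝ := (C + 1) / Real.pi with hαdef
  have hπ := Real.pi_pos
  have hα : 0 < α := div_pos (by linarith) hπ
  have hαinv : α⁻¹ = Real.pi / (C + 1) := by
    rw [hαdef, inv_div]
  have hainv0 : 0 < α⁻¹ := inv_pos.2 hα
  have hainvπ : α⁻¹ ≤ Real.pi := by
    rw [hαinv]
    rw [div_le_iff₀ (by linarith)]
    nlinarith
  set δ : ℝ := 1 - Real.cos α⁻¹ with hδdef
  have hδ : 0 < δ := by
    have : Real.cos α⁻¹ < Real.cos 0 :=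
      Real.cos_lt_cos_of_nonneg_of_le_pi le_rfl hainvπ hainv0
    rw [Real.cos_zero] at this
    simp only [hδdef]
    linarith
  -- key pointwise inequality
  have hkey : ∀ n (v : V), ‖v‖ ≤ 1 → 1 < |vs n v| →
      |vs n v| ≤ (C / δ) * (1 - Real.cos (α⁻¹ * vs n v)) := by
    intro n v hv hgt
    have hb := hvsC n v hv
    have hcos : Real.cos (α⁻¹ * vs n v) ≤ Real.cos α⁻¹ := by
      have habs : Real.cos (α⁻¹ * vs n v) = Real.cos (α⁻¹ * |vs n v|) := by
        rw [← Real.cos_abs (α⁻¹ * vs n v), abs_mul, abs_of_pos hainv0]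
      rw [habs]
      apply Real.cos_le_cos_of_nonneg_of_le_pi hainv0.le
      · rw [hαinv]
        rw [div_mul_eq_mul_div, div_le_iff₀ (by linarith)]
        nlinarith
      · nlinarith
    calc |vs n v| ≤ C := hb
    _ = (C / δ) * δ := by field_simp
    _ ≤ (C / δ) * (1 - Real.cos (α⁻¹ * vs n v)) := by
        apply mul_le_mul_of_nonneg_left _ (div_nonneg hC0 hδ.le)
        simp only [hδdef]; linarith
  -- integrability of the cosine integrand wrt ξ and ξ + ξ⁻
  have hIξ : ∀ n, Integrable (fun v => 1 - Real.cos (α⁻¹ * vs n v)) ξ :=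
    fun n => auxInt V ξ h1 h2 α⁻¹ (vs n)
  have hImap : ∀ n, Integrable (fun v => 1 - Real.cos (α⁻¹ * vs n v))
      (ξ.map (fun v => -v)) := by
    intro n
    have hc : Continuous fun v : V => 1 - Real.cos (α⁻¹ * vs n v) :=
      continuous_const.sub (Real.continuous_cos.comp (continuous_const.mul (vs n).continuous))
    rw [integrable_map_measure hc.aestronglyMeasurable measurable_neg.aemeasurable]
    have he : ((fun v : V => 1 - Real.cos (α⁻¹ * vs n v)) ∘ Neg.neg)
        = (fun v : V => 1 - Real.cos (α⁻¹ * vs n v)) := by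
      funext v
      simp [Function.comp_apply, map_neg, mul_neg, Real.cos_neg]
    rw [he]
    exact hIξ n
  have hIsum : ∀ n, Integrable (fun v => 1 - Real.cos (α⁻¹ * vs n v))
      (ξ + ξ.map (fun v => -v)) :=
    fun n => (hIξ n).add_measure (hImap n)
  -- ψ n → 0
  set ψ : ℕ → ℝ := fun n => ∫ v, (1 - Real.cos (α⁻¹ * vs n v))
      ∂(ξ + ξ.map (fun v => -v)) with hψdef
  have hψ0 : ∀ n, 0 ≤ ψ n := by
    intro n
    apply integral_nonneg
    intro v
    have := Real.cos_le_one (α⁻¹ * vs n v)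
    simp only [Pi.zero_apply]; linarith
  have hψto : Tendsto ψ atTop (nhds 0) := by
    obtain ⟨θ, hθp, hθc⟩ := h3 α hα
    have hDCT : Tendsto (fun n => ∫ v, Complex.exp (Complex.I * (vs n v : ℂ)) ∂θ)
        atTop (nhds (∫ _v, (1 : ℂ) ∂θ)) := by
      apply tendsto_integral_of_dominated_convergence (fun _ => (1 : ℝ))
      · intro n
        exact Continuous.aestronglyMeasurable (Complex.continuous_exp.comp
          (continuous_const.mul (Complex.continuous_ofReal.comp (vs n).continuous)))
      · exact integrable_const 1
      · intro n
        filter_upwards with v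
        simp [Complex.norm_exp]
      · filter_upwards with v
        have : Tendsto (fun n => Complex.I * (vs n v : ℂ)) atTop (nhds 0) := by
          have h1' : Tendsto (fun n => ((vs n v : ℝ) : ℂ)) atTop (nhds ((0 : ℝ) : ℂ)) :=
            (Complex.continuous_ofReal.tendsto _).comp (hvs v)
          simpa using h1'.const_mul Complex.I
        simpa [Function.comp_def] using (Complex.continuous_exp.tendsto _).comp this
    rw [integral_const] at hDCT
    simp only [Measure.real, hθp.measure_univ, ENNReal.toReal_one, one_smul] at hDCT
    have hDCT2 : Tendsto (fun n => Complex.exp (-((ψ n : ℝ) : ℂ))) atTop (nhds 1) := by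
      convert hDCT using 2 with n
      exact (hθc (vs n)).symm
    have hre : Tendsto (fun n => Real.exp (-(ψ n))) atTop (nhds 1) := by
      have : Tendsto (fun n => (Complex.exp (-((ψ n : ℝ) : ℂ))).re) atTop (nhds (1 : ℂ).re) :=
        (Complex.continuous_re.tendsto _).comp hDCT2
      simpa [← Complex.ofReal_neg, ← Complex.ofReal_exp] using this
    have hlog : Tendsto (fun n => Real.log (Real.exp (-(ψ n)))) atTop (nhds (Real.log 1)) :=
      ((Real.continuousAt_log one_ne_zero).tendsto).comp hre
    simp only [Real.log_exp, Real.log_one] at hlog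
    simpa using hlog.neg
  -- the two pieces
  set g : ℕ → V → ℝ := fun n => Set.indicator {v : V | ‖v‖ ≤ 1 ∧ 1 < |vs n v|}
      (fun v => vs n v) with hgdef
  set h : ℕ → V → ℝ := fun n => Set.indicator {v : V | 1 < ‖v‖ ∧ |vs n v| ≤ 1}
      (fun v => vs n v) with hhdef
  have hgS : ∀ n, MeasurableSet {v : V | ‖v‖ ≤ 1 ∧ 1 < |vs n v|} := by
    intro n
    apply MeasurableSet.inter
    · exact measurableSet_le (measurable_norm) measurable_const
    · exact measurableSet_lt measurable_const ((vs n).continuous.measurable.abs)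
  have hhS : ∀ n, MeasurableSet {v : V | 1 < ‖v‖ ∧ |vs n v| ≤ 1} := by
    intro n
    apply MeasurableSet.inter
    · exact measurableSet_lt measurable_const measurable_norm
    · exact measurableSet_le ((vs n).continuous.measurable.abs) measurable_const
  have hgbd : ∀ n (v : V), ‖g n v‖ ≤
      ‖(C / δ) * (1 - Real.cos (α⁻¹ * vs n v))‖ := by
    intro n v
    have hrhs : 0 ≤ (C / δ) * (1 - Real.cos (α⁻¹ * vs n v)) := by
      apply mul_nonneg (div_nonneg hC0 hδ.le)
      have := Real.cos_le_one (α⁻¹ * vs n v); linarith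
    rw [Real.norm_eq_abs, Real.norm_eq_abs, abs_of_nonneg hrhs]
    by_cases hv : v ∈ {v : V | ‖v‖ ≤ 1 ∧ 1 < |vs n v|}
    · rw [hgdef]; simp only [Set.indicator_of_mem hv]
      exact hkey n v hv.1 hv.2
    · rw [hgdef]; simp only [Set.indicator_of_notMem hv, abs_zero]
      exact hrhs
  have hgInt : ∀ n, Integrable (g n) ξ := by
    intro n
    apply Integrable.mono ((hIξ n).const_mul (C / δ))
    · exact ((vs n).continuous.aestronglyMeasurable).indicator (hgS n)
    · filter_upwards with v using hgbd n v
  have hhInt : ∀ n, Integrable (h n) ξ := by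
    intro n
    apply Integrable.mono
      ((integrable_indicator_iff (measurableSet_lt measurable_const measurable_norm)).2
        (integrableOn_const (C := (1:ℝ)) h1.ne))
    · exact ((vs n).continuous.aestronglyMeasurable).indicator (hhS n)
    · filter_upwards with v
      by_cases hv : v ∈ {v : V | 1 < ‖v‖ ∧ |vs n v| ≤ 1}
      · rw [hhdef]; simp only [Set.indicator_of_mem hv]
        rw [Real.norm_eq_abs]
        rw [Set.indicator_of_mem (show v ∈ {v : V | 1 < ‖v‖} from hv.1)]
        simpa using hv.2
      · rw [hhdef]; simp only [Set.indicator_of_notMem hv, norm_zero]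
        exact norm_nonneg _
  -- decomposition of the integrand
  have hsplit : ∀ n (v : V), (vs n v) *
        (Set.indicator {v : V | ‖v‖ ≤ 1} (fun _ => (1 : ℝ)) v
          - Set.indicator {β : ℝ | |β| ≤ 1} (fun _ => (1 : ℝ)) (vs n v))
      = g n v - h n v := by
    intro n v
    rw [hgdef, hhdef]
    simp only [Set.indicator_apply, Set.mem_setOf_eq]
    by_cases hP : ‖v‖ ≤ 1 <;> by_cases hQ : |vs n v| ≤ 1 <;>
      simp [hP, hQ, not_le.1, not_le.2, lt_of_not_ge, not_lt.2] <;> ring_nf <;>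
      first
        | rfl
        | (simp [not_le.1 hP, not_le.1 hQ, not_lt.2 hP, not_lt.2 hQ]) <;> ring
  -- tendsto of the h-part
  have hhto : Tendsto (fun n => ∫ v, h n v ∂ξ) atTop (nhds 0) := by
    have := tendsto_integral_of_dominated_convergence
      (μ := ξ) (F := fun n v => h n v) (f := fun _ => (0 : ℝ))
      (bound := Set.indicator {v : V | 1 < ‖v‖} (fun _ => (1 : ℝ)))
      (fun n => ((vs n).continuous.aestronglyMeasurable).indicator (hhS n))
      ((integrable_indicator_iff (measurableSet_lt measurable_const measurable_norm)).2
        (integrableOn_const (C := (1:ℝ)) h1.ne))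
      ?_ ?_
    · simpa using this
    · intro n
      filter_upwards with v
      by_cases hv : v ∈ {v : V | 1 < ‖v‖ ∧ |vs n v| ≤ 1}
      · rw [hhdef]; simp only [Set.indicator_of_mem hv, Real.norm_eq_abs]
        rw [Set.indicator_of_mem (show v ∈ {v : V | 1 < ‖v‖} from hv.1)]
        simpa using hv.2
      · rw [hhdef]; simp only [Set.indicator_of_notMem hv, norm_zero]
        exact Set.indicator_nonneg (fun _ _ => zero_le_one) v
    · filter_upwards with v
      apply squeeze_zero_norm _ (by simpa using (hvs v).norm)
      intro n
      rw [hhdef]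
      by_cases hv : v ∈ {v : V | 1 < ‖v‖ ∧ |vs n v| ≤ 1}
      · simp only [Set.indicator_of_mem hv]
        exact (Real.norm_eq_abs _).le
      · simp only [Set.indicator_of_notMem hv, norm_zero]
        exact abs_nonneg _
  -- tendsto of the g-part
  have hgto : Tendsto (fun n => ∫ v, g n v ∂ξ) atTop (nhds 0) := by
    have hb2 : Tendsto (fun n => (C / δ) * ψ n) atTop (nhds 0) := by
      simpa using hψto.const_mul (C / δ)
    apply squeeze_zero_norm _ hb2
    · intro n
      calc ‖∫ v, g n v ∂ξ‖
          ≤ ∫ v, (C / δ) * (1 - Real.cos (α⁻¹ * vs n v)) ∂ξ := by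
            apply norm_integral_le_of_norm_le ((hIξ n).const_mul (C / δ))
            filter_upwards with v
            have := hgbd n v
            rw [Real.norm_eq_abs (((C / δ)) * _)] at this
            calc ‖g n v‖ ≤ |(C / δ) * (1 - Real.cos (α⁻¹ * vs n v))| := hgbd n v
            _ = (C / δ) * (1 - Real.cos (α⁻¹ * vs n v)) := by
                apply abs_of_nonneg
                apply mul_nonneg (div_nonneg hC0 hδ.le)
                have := Real.cos_le_one (α⁻¹ * vs n v); linarith
      _ = (C / δ) * ∫ v, (1 - Real.cos (α⁻¹ * vs n v)) ∂ξ := integral_const_mul _ _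
      _ ≤ (C / δ) * ψ n := by
            apply mul_le_mul_of_nonneg_left _ (div_nonneg hC0 hδ.le)
            show (∫ v, (1 - Real.cos (α⁻¹ * vs n v)) ∂ξ)
              ≤ ∫ v, (1 - Real.cos (α⁻¹ * vs n v)) ∂(ξ + ξ.map fun v => -v)
            rw [integral_add_measure (hIξ n) (hImap n)]
            have : 0 ≤ ∫ v, (1 - Real.cos (α⁻¹ * vs n v)) ∂(ξ.map (fun v => -v)) := by
              apply integral_nonneg
              intro v
              have := Real.cos_le_one (α⁻¹ * vs n v)
              simp only [Pi.zero_apply]; linarith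
            linarith
  -- combine
  have hEq : (fun n => ∫ v, (vs n v) *
        (Set.indicator {v : V | ‖v‖ ≤ 1} (fun _ => (1 : ℝ)) v
          - Set.indicator {β : ℝ | |β| ≤ 1} (fun _ => (1 : ℝ)) (vs n v)) ∂ξ)
      = fun n => (∫ v, g n v ∂ξ) - ∫ v, h n v ∂ξ := by
    funext n
    rw [show (fun v => (vs n v) *
        (Set.indicator {v : V | ‖v‖ ≤ 1} (fun _ => (1 : ℝ)) v
          - Set.indicator {β : ℝ | |β| ≤ 1} (fun _ => (1 : ℝ)) (vs n v)))
        = fun v => g n v - h n v from funext (hsplit n)]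
    exact integral_sub (hgInt n) (hhInt n)
  rw [hEq]
  simpa using hgto.sub hhto
end

section
/- Let 0 < α < 2, T > 0, (σ_k)_{k∈ℕ} a sequence of real numbers, and (γ_k)_{k∈ℕ} a sequence of strictly negative real numbers with γ_k → −∞ as k → ∞. Then Σ_{k=1}^∞ ∫₀^T ∫_ℝ (e^{2γ_k s} σ_k² β² ∧ 1) · (1/2)|β|^{−1−α} dβ ds < ∞ if and only if Σ_{k=1}^∞ |σ_k|^α / |γ_k| < ∞. -/
open MeasureTheory Filter

/-- Inner integral computation: for `c > 0`,
`∫ β, min (c β²) 1 · ½|β|^{-1-α} dβ = c^{α/2} (1/(2-α) + 1/α)`. -/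
lemma stmt9_inner {α : ℝ} (hα0 : 0 < α) (hα2 : α < 2) {c : ℝ} (hc : 0 < c) :
    (∫ β : ℝ, (if β = 0 then 0 else min (c * β ^ 2) 1 * (1 / 2 * |β| ^ (-1 - α))))
      = c ^ (α / 2) * (1 / (2 - α) + 1 / α) := by
  set f : ℝ → ℝ := fun t => if t = 0 then 0 else min (c * t ^ 2) 1 * (1 / 2 * |t| ^ (-1 - α))
    with hf
  have habs : ∀ β : ℝ,
      (if β = 0 then 0 else min (c * β ^ 2) 1 * (1 / 2 * |β| ^ (-1 - α))) = f |β| := by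
    intro β
    simp only [hf, abs_eq_zero, abs_abs, sq_abs]
  calc (∫ β : ℝ, (if β = 0 then 0 else min (c * β ^ 2) 1 * (1 / 2 * |β| ^ (-1 - α))))
      = ∫ β : ℝ, f |β| := by simp_rw [habs]
    _ = 2 * ∫ t in Set.Ioi (0 : ℝ), f t := integral_comp_abs
    _ = c ^ (α / 2) * (1 / (2 - α) + 1 / α) := by
        set b : ℝ := c ^ (-(1/2) : ℝ) with hb
        have hb0 : 0 < b := Real.rpow_pos_of_pos hc _
        have hbsq : c * b ^ 2 = 1 := by
          rw [hb, ← Real.rpow_natCast (c ^ (-(1/2) : ℝ)) 2, ← Real.rpow_mul hc.le]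
          norm_num
          rw [Real.rpow_neg_one]
          field_simp
        have h1 : ∀ t ∈ Set.Ioc (0 : ℝ) b, f t = c / 2 * t ^ (1 - α) := by
          intro t ht
          have ht0 : 0 < t := ht.1
          have hmin : min (c * t ^ 2) 1 = c * t ^ 2 := by
            apply min_eq_left
            calc c * t ^ 2 ≤ c * b ^ 2 := by
                  apply mul_le_mul_of_nonneg_left _ hc.le
                  exact pow_le_pow_left₀ ht0.le ht.2 2
              _ = 1 := hbsq
          have hrp : t ^ (((2:ℕ)):ℝ) * t ^ (-1 - α) = t ^ (1 - α) := by
            rw [← Real.rpow_add ht0]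
            congr 1
            push_cast; ring
          simp only [hf, if_neg ht0.ne', abs_of_pos ht0, hmin]
          rw [← Real.rpow_natCast t 2, show c * t ^ (((2:ℕ)):ℝ) * (1 / 2 * t ^ (-1 - α))
            = c / 2 * (t ^ (((2:ℕ)):ℝ) * t ^ (-1 - α)) by ring, hrp]
        have h2 : ∀ t ∈ Set.Ioi b, f t = 1 / 2 * t ^ (-1 - α) := by
          intro t ht
          have ht0 : 0 < t := hb0.trans ht
          have hmin : min (c * t ^ 2) 1 = 1 := by
            apply min_eq_right
            calc (1 : ℝ) = c * b ^ 2 := hbsq.symm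
              _ ≤ c * t ^ 2 := by
                  apply mul_le_mul_of_nonneg_left _ hc.le
                  exact pow_le_pow_left₀ hb0.le (le_of_lt ht) 2
          simp only [hf, if_neg ht0.ne', abs_of_pos ht0, hmin, one_mul]
        have int1 : IntegrableOn f (Set.Ioc 0 b) := by
          have : IntervalIntegrable (fun t : ℝ => c / 2 * t ^ (1 - α)) volume 0 b :=
            (intervalIntegral.intervalIntegrable_rpow' (by linarith)).const_mul _
          rw [intervalIntegrable_iff_integrableOn_Ioc_of_le hb0.le] at this
          exact this.congr_fun (fun t ht => (h1 t ht).symm) measurableSet_Ioc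
        have int2 : IntegrableOn f (Set.Ioi b) := by
          have : IntegrableOn (fun t : ℝ => 1 / 2 * t ^ (-1 - α)) (Set.Ioi b) :=
            (integrableOn_Ioi_rpow_of_lt (by linarith) hb0).const_mul _
          exact this.congr_fun (fun t ht => (h2 t ht).symm) measurableSet_Ioi
        have hsplit : Set.Ioc (0 : ℝ) b ∪ Set.Ioi b = Set.Ioi 0 :=
          Set.Ioc_union_Ioi_eq_Ioi hb0.le
        rw [← hsplit, setIntegral_union (Set.Ioc_disjoint_Ioi le_rfl) measurableSet_Ioi
          int1 int2]
        have v1 : ∫ t in Set.Ioc (0 : ℝ) b, f t = c / 2 * (b ^ (2 - α) / (2 - α)) := by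
          rw [setIntegral_congr_fun measurableSet_Ioc h1]
          rw [← intervalIntegral.integral_of_le hb0.le, intervalIntegral.integral_const_mul,
            integral_rpow (Or.inl (by linarith))]
          rw [show (1 : ℝ) - α + 1 = 2 - α by ring, Real.zero_rpow (by linarith : (2:ℝ) - α ≠ 0)]
          ring
        have v2 : ∫ t in Set.Ioi b, f t = 1 / 2 * (b ^ (-α) / α) := by
          rw [setIntegral_congr_fun measurableSet_Ioi h2, integral_const_mul,
            integral_Ioi_rpow_of_lt (by linarith) hb0]
          rw [show (-1 : ℝ) - α + 1 = -α by ring]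
          field_simp
        rw [v1, v2, hb, ← Real.rpow_mul hc.le, ← Real.rpow_mul hc.le]
        have e1 : -(1/2) * (2 - α) = α / 2 - 1 := by ring
        have e2 : -(1/2) * (-α) = α / 2 := by ring
        rw [e1, e2]
        have e3 : c * c ^ (α / 2 - 1) = c ^ (α / 2) := by
          nth_rewrite 1 [← Real.rpow_one c]
          rw [← Real.rpow_add hc]
          norm_num
        set X := c ^ (α / 2 - 1) with hX
        set Y := c ^ (α / 2) with hY
        calc 2 * (c / 2 * (X / (2 - α)) + 1 / 2 * (Y / α))
            = (c * X) / (2 - α) + Y / α := by ring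
          _ = Y / (2 - α) + Y / α := by rw [e3]
          _ = Y * (1 / (2 - α) + 1 / α) := by ring

/-- The stochastic integrability criterion for a diagonal semigroup with eigenvalues
`e^{γ_k t}`, `γ_k < 0`, `γ_k → −∞`, with respect to an α-stable cylindrical noise with
coefficients `σ_k`, is equivalent to `Σ |σ_k|^α / |γ_k| < ∞`. -/
theorem stmt9 (α T : ℝ) (hα0 : 0 < α) (hα2 : α < 2) (hT : 0 < T)
    (σ γ : ℕ → ℝ) (hγ : ∀ k, γ k < 0) (hγ' : Tendsto γ atTop atBot) :
    (Summable fun k => ∫ s in Set.Icc (0 : ℝ) T, ∫ β : ℝ,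
        (if β = 0 then 0
          else min (Real.exp (2 * γ k * s) * (σ k) ^ 2 * β ^ 2) 1
            * (1 / 2 * |β| ^ (-1 - α))))
      ↔ Summable fun k => |σ k| ^ α / |γ k| := by
  set C : ℝ := 1 / (2 - α) + 1 / α with hC
  have hCpos : 0 < C := by
    have h1 : 0 < 1 / (2 - α) := by apply div_pos one_pos; linarith
    have h2 : 0 < 1 / α := by positivity
    rw [hC]; linarith
  set g : ℕ → ℝ := fun k => |σ k| ^ α / |γ k| with hgdef
  set D : ℕ → ℝ := fun k => 1 - Real.exp (α * γ k * T) with hDdef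
  have hg0 : ∀ k, 0 ≤ g k := fun k => by
    show (0:ℝ) ≤ |σ k| ^ α / |γ k|
    positivity
  have hD1 : ∀ k, D k ≤ 1 := fun k => by
    show 1 - Real.exp (α * γ k * T) ≤ 1
    have := Real.exp_pos (α * γ k * T); linarith
  have hD0 : ∀ k, 0 < D k := fun k => by
    show (0:ℝ) < 1 - Real.exp (α * γ k * T)
    have : Real.exp (α * γ k * T) < 1 := by
      rw [Real.exp_lt_one_iff]
      exact mul_neg_of_neg_of_pos (mul_neg_of_pos_of_neg hα0 (hγ k)) hT
    linarith
  have key : ∀ k, (∫ s in Set.Icc (0 : ℝ) T, ∫ β : ℝ,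
        (if β = 0 then 0
          else min (Real.exp (2 * γ k * s) * (σ k) ^ 2 * β ^ 2) 1
            * (1 / 2 * |β| ^ (-1 - α)))) = C / α * g k * D k := by
    intro k
    have step1 : ∀ s : ℝ, (∫ β : ℝ,
        (if β = 0 then 0
          else min (Real.exp (2 * γ k * s) * (σ k) ^ 2 * β ^ 2) 1
            * (1 / 2 * |β| ^ (-1 - α))))
        = C * |σ k| ^ α * Real.exp (α * γ k * s) := by
      intro s
      rcases eq_or_ne (σ k) 0 with h | h
      · have : ∀ β : ℝ, (if β = 0 then 0
            else min (Real.exp (2 * γ k * s) * (σ k) ^ 2 * β ^ 2) 1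
              * (1 / 2 * |β| ^ (-1 - α))) = 0 := by
          intro β
          by_cases hβ : β = 0 <;> simp [hβ, h]
        simp_rw [this, integral_zero, h, abs_zero, Real.zero_rpow hα0.ne', mul_zero, zero_mul]
      · have hc : 0 < Real.exp (2 * γ k * s) * (σ k) ^ 2 := by positivity
        rw [stmt9_inner hα0 hα2 hc]
        have hd : (Real.exp (2 * γ k * s) * (σ k) ^ 2) ^ (α / 2)
            = Real.exp (α * γ k * s) * |σ k| ^ α := by
          rw [Real.mul_rpow (Real.exp_pos _).le (sq_nonneg _), ← Real.exp_mul]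
          congr 1
          · congr 1; ring
          · rw [← sq_abs, ← Real.rpow_natCast |σ k| 2, ← Real.rpow_mul (abs_nonneg _)]
            push_cast
            rw [show (2:ℝ) * (α/2) = α by ring]
        rw [hd]; ring
    rw [setIntegral_congr_fun measurableSet_Icc (fun s _ => step1 s)]
    rw [MeasureTheory.integral_Icc_eq_integral_Ioc, ← intervalIntegral.integral_of_le hT.le,
      intervalIntegral.integral_const_mul]
    have hne : α * γ k ≠ 0 := by
      have := hγ k; intro hcon
      rcases mul_eq_zero.1 hcon with h | h
      · exact hα0.ne' h
      · exact (hγ k).ne h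
    have hexp : ∫ s in (0 : ℝ)..T, Real.exp (α * γ k * s)
        = (Real.exp (α * γ k * T) - 1) / (α * γ k) := by
      rw [intervalIntegral.integral_comp_mul_left (fun u => Real.exp u) hne, integral_exp,
        mul_zero, Real.exp_zero, smul_eq_mul]
      ring
    rw [hexp]
    show _ = C / α * (|σ k| ^ α / |γ k|) * (1 - Real.exp (α * γ k * T))
    rw [abs_of_neg (hγ k)]
    have hγne : γ k ≠ 0 := (hγ k).ne
    field_simp
    ring
  have hrw : (fun k => ∫ s in Set.Icc (0 : ℝ) T, ∫ β : ℝ,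
        (if β = 0 then 0
          else min (Real.exp (2 * γ k * s) * (σ k) ^ 2 * β ^ 2) 1
            * (1 / 2 * |β| ^ (-1 - α)))) = fun k => C / α * g k * D k := funext key
  rw [hrw]
  constructor
  · intro h
    have htend : Tendsto (fun k => Real.exp (α * γ k * T)) atTop (nhds 0) := by
      apply Real.tendsto_exp_atBot.comp
      have h1 : Tendsto (fun k => α * γ k) atTop atBot := by
        exact Tendsto.const_mul_atBot hα0 hγ'
      exact Tendsto.atBot_mul_const hT h1
    have hev : ∀ᶠ k in atTop, Real.exp (α * γ k * T) ≤ 1 / 2 :=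
      htend.eventually_le_const (by norm_num)
    obtain ⟨N, hN⟩ := eventually_atTop.1 hev
    rw [← summable_nat_add_iff N]
    have hmaj : Summable fun k => 2 * (C / α * g (k + N) * D (k + N)) :=
      (((summable_nat_add_iff N).2 h).mul_left 2)
    apply Summable.of_nonneg_of_le (fun k => hg0 _) _ (hmaj.mul_left (α / C))
    intro k
    have hDk : 1 / 2 ≤ D (k + N) := by
      have := hN (k + N) (Nat.le_add_left N k)
      unfold D; linarith
    have hgk := hg0 (k + N)
    have hCα : 0 < C / α := by positivity
    calc g (k + N) = α / C * (2 * (C / α * g (k + N) * (1/2))) := by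
          field_simp
      _ ≤ α / C * (2 * (C / α * g (k + N) * D (k + N))) := by
          apply mul_le_mul_of_nonneg_left _ (by positivity)
          apply mul_le_mul_of_nonneg_left _ (by norm_num)
          exact mul_le_mul_of_nonneg_left hDk (by positivity)
  · intro h
    apply Summable.of_nonneg_of_le (fun k => by
        have := (hD0 k).le; have := hg0 k; positivity)
      _ (h.mul_left (C / α))
    intro k
    calc C / α * g k * D k ≤ C / α * g k * 1 := by
          apply mul_le_mul_of_nonneg_left (hD1 k) (by positivity)
      _ = C / α * g k := mul_one _
end

section
/- Let (X, Σ, ξ) be a measure space, m ∈ ℕ, and c : X → ℝᵐ a measurable function. Let γᵐ denote the standard Gaussian measure on ℝᵐ (the m-fold product of the standard normal distribution on ℝ). Then ∫_{ℝᵐ} ∫_X ( (Σ_{k=1}^m β_k c_k(x))² ∧ 1 ) ξ(dx) γᵐ(dβ) ≤ ∫_X ( (Σ_{k=1}^m c_k(x)²) ∧ 1 ) ξ(dx), where x ∧ y denotes min(x,y). -/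
open MeasureTheory ProbabilityTheory
open Real

lemma gauss_eq : gaussianReal 0 1 =
    volume.withDensity (fun x => ((gaussianPDFReal 0 1 x).toNNReal : ENNReal)) := by
  rw [gaussianReal_of_var_ne_zero _ one_ne_zero]; rfl

lemma pdf_eq (x : ℝ) : gaussianPDFReal 0 1 x = (√(2 * π))⁻¹ * rexp (-(1/2) * x ^ 2) := by
  simp only [gaussianPDFReal, NNReal.coe_one, mul_one, zero_sub, neg_sq, sub_zero]
  ring_nf

lemma meas_pdf : Measurable (fun x : ℝ => ((gaussianPDFReal 0 1 x).toNNReal : ENNReal)) :=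
  (measurable_gaussianPDFReal 0 1).real_toNNReal.coe_nnreal_ennreal

lemma integrable_mul_pdf_iff (g : ℝ → ℝ) :
    Integrable g (gaussianReal 0 1) ↔
      Integrable (fun x => g x * gaussianPDFReal 0 1 x) volume := by
  rw [gauss_eq, integrable_withDensity_iff meas_pdf (ae_of_all _ fun x => ENNReal.coe_lt_top)]
  simp only [ENNReal.coe_toReal, Real.coe_toNNReal _ (gaussianPDFReal_nonneg 0 1 _)]

lemma integrable_sq_gauss : Integrable (fun x : ℝ => x ^ 2) (gaussianReal 0 1) := by
  rw [integrable_mul_pdf_iff]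
  have h0 := integrable_rpow_mul_exp_neg_mul_sq (b := 1/2) (by norm_num) (s := 2) (by norm_num)
  rw [show (2:ℝ) = ((2:ℕ):ℝ) by norm_num] at h0
  simp only [Real.rpow_natCast] at h0
  refine (h0.const_mul ((√(2 * π))⁻¹)).congr (ae_of_all _ fun x => ?_)
  simp only [pdf_eq]
  ring

lemma integrable_id_gauss : Integrable (fun x : ℝ => x) (gaussianReal 0 1) := by
  rw [integrable_mul_pdf_iff]
  have h : Integrable (fun x : ℝ => (√(2 * π))⁻¹ * (x * rexp (-(1/2) * x ^ 2))) volume :=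
    ((integrable_mul_exp_neg_mul_sq (by norm_num : (0:ℝ) < 1/2)).const_mul _)
  refine h.congr (ae_of_all _ fun x => ?_)
  simp only [pdf_eq]
  ring

lemma integral_id_gauss : ∫ x, x ∂(gaussianReal 0 1) = 0 := by
  have hmap : (gaussianReal 0 1).map (fun x => (-1 : ℝ) * x) = gaussianReal 0 1 := by
    rw [gaussianReal_map_const_mul (-1)]
    norm_num
  have h := integral_map (μ := gaussianReal 0 1) (φ := fun x => (-1:ℝ) * x)
    (by fun_prop) (f := fun x => x) aestronglyMeasurable_id
  rw [hmap] at h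
  simp only [neg_one_mul] at h
  rw [integral_neg] at h
  have : ∫ x, x ∂(gaussianReal 0 1) = ∫ (y : ℝ), y ∂(gaussianReal 0 1) := rfl
  linarith [h]

lemma integral_sq_exp : ∫ x : ℝ, x ^ 2 * rexp (-(1/2) * x ^ 2) = √(2 * π) := by
  have h1 : ∫ x : ℝ, x ^ 2 * rexp (-(1/2) * x ^ 2)
      = 2 * ∫ x in Set.Ioi (0:ℝ), x ^ 2 * rexp (-(1/2) * x ^ 2) := by
    rw [← integral_comp_abs (f := fun x => x ^ 2 * rexp (-(1/2) * x ^ 2))]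
    congr 1
    ext x
    rw [sq_abs]
  have h2 : ∫ x in Set.Ioi (0:ℝ), x ^ 2 * rexp (-(1/2) * x ^ 2)
      = ∫ x in Set.Ioi (0:ℝ), x ^ (2:ℝ) * rexp (-(1/2) * x ^ (2:ℝ)) := by
    refine setIntegral_congr_fun measurableSet_Ioi (fun x hx => ?_)
    rw [show (2:ℝ) = ((2:ℕ):ℝ) by norm_num, Real.rpow_natCast]
  rw [h1, h2, integral_rpow_mul_exp_neg_mul_rpow (by norm_num) (by norm_num) (by norm_num)]
  rw [show (-(2+1)/2 : ℝ) = -(3/2) by norm_num, show ((2+1)/2 : ℝ) = 1/2 + 1 by norm_num,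
    Real.Gamma_add_one (by norm_num), Real.Gamma_one_half_eq]
  rw [show ((1:ℝ)/2) = 2⁻¹ by norm_num, Real.inv_rpow (by norm_num), ← Real.rpow_neg_one,
    ← Real.rpow_mul (by norm_num)]
  rw [show (-(3/2) * (-1) : ℝ) = 1 + 1/2 by norm_num, Real.rpow_add (by norm_num),
    Real.rpow_one, ← Real.sqrt_eq_rpow, Real.sqrt_mul (by norm_num)]
  ring

lemma integral_sq_gauss : ∫ x, x ^ 2 ∂(gaussianReal 0 1) = 1 := by
  rw [gauss_eq, integral_withDensity_eq_integral_smul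
    (measurable_gaussianPDFReal 0 1).real_toNNReal (fun x => x ^ 2)]
  have : ∀ x : ℝ, (gaussianPDFReal 0 1 x).toNNReal • (x:ℝ) ^ 2
      = (√(2 * π))⁻¹ * (x ^ 2 * rexp (-(1/2) * x ^ 2)) := by
    intro x
    rw [NNReal.smul_def, Real.coe_toNNReal _ (gaussianPDFReal_nonneg 0 1 x), pdf_eq,
      smul_eq_mul]
    ring
  simp_rw [this]
  rw [integral_const_mul, integral_sq_exp, inv_mul_cancel₀]
  positivity

noncomputable def gmeas : MeasureSpace ℝ := ⟨gaussianReal 0 1⟩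

lemma integral_pi_gauss_prod {m : ℕ} (f : Fin m → ℝ → ℝ) :
    ∫ β : Fin m → ℝ, ∏ i, f i (β i) ∂(Measure.pi fun _ => gaussianReal 0 1)
      = ∏ i, ∫ x, f i x ∂(gaussianReal 0 1) :=
  @MeasureTheory.integral_fin_nat_prod_eq_prod ℝ _ m (fun _ => ℝ)
    (fun _ => inferInstance) (fun _ => gaussianReal 0 1) (fun _ => (inferInstance : SigmaFinite (gaussianReal 0 1))) f

lemma integrable_pi_gauss_prod {m : ℕ} (f : Fin m → ℝ → ℝ)
    (hf : ∀ i, Integrable (f i) (gaussianReal 0 1)) :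
    Integrable (fun β : Fin m → ℝ => ∏ i, f i (β i))
      (Measure.pi fun _ : Fin m => gaussianReal 0 1) :=
  @MeasureTheory.Integrable.fin_nat_prod ℝ _ m (fun _ => ℝ)
    (fun _ => inferInstance) (fun _ => gaussianReal 0 1) (fun _ => (inferInstance : SigmaFinite (gaussianReal 0 1))) f hf

lemma prod_coord (m : ℕ) (j k : Fin m) (β : Fin m → ℝ) :
    ∏ i, ((if i = j then β i else 1) * (if i = k then β i else 1)) = β j * β k := by
  rw [Finset.prod_mul_distrib, Finset.prod_ite_eq' Finset.univ j (fun i => β i),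
    Finset.prod_ite_eq' Finset.univ k (fun i => β i)]
  simp

lemma integrable_coord_mul (m : ℕ) (j k : Fin m) :
    Integrable (fun β : Fin m → ℝ => β j * β k)
      (Measure.pi fun _ : Fin m => gaussianReal 0 1) := by
  have h := integrable_pi_gauss_prod
      (fun i t => (if i = j then t else 1) * (if i = k then t else 1)) ?_
  · exact h.congr (ae_of_all _ fun β => prod_coord m j k β)
  · intro i
    rcases eq_or_ne i j with rfl | hij <;> rcases eq_or_ne i k with rfl | hik <;>
      simp_all only [if_pos, if_neg, ite_true, ite_false]
    · exact integrable_sq_gauss.congr (ae_of_all _ fun x => sq x)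
    · simpa using integrable_id_gauss
    · simpa using integrable_id_gauss
    · simpa using (integrable_const (1:ℝ))

lemma integral_coord_mul (m : ℕ) (j k : Fin m) :
    ∫ β : Fin m → ℝ, β j * β k ∂(Measure.pi fun _ : Fin m => gaussianReal 0 1)
      = if j = k then 1 else 0 := by
  have h1 : ∫ β : Fin m → ℝ, β j * β k ∂(Measure.pi fun _ : Fin m => gaussianReal 0 1)
      = ∏ i, ∫ x, ((if i = j then x else 1) * (if i = k then x else 1)) ∂(gaussianReal 0 1) := by
    rw [← integral_pi_gauss_prod (fun i t => (if i = j then t else 1) * (if i = k then t else 1))]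
    exact integral_congr_ae (ae_of_all _ fun β => (prod_coord m j k β).symm)
  rw [h1]
  rcases eq_or_ne j k with rfl | hjk
  · rw [if_pos rfl]
    refine Finset.prod_eq_one fun i _ => ?_
    rcases eq_or_ne i j with rfl | hij
    · calc (∫ x, ((if i = i then x else 1) * if i = i then x else 1) ∂(gaussianReal 0 1))
          = ∫ x, x ^ 2 ∂(gaussianReal 0 1) :=
            integral_congr_ae (ae_of_all _ fun x => by simp [sq])
        _ = 1 := integral_sq_gauss
    · simp only [if_neg hij, mul_one]
      simp
  · rw [if_neg hjk]
    refine Finset.prod_eq_zero (Finset.mem_univ j) ?_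
    simp only [if_pos rfl, if_neg hjk, mul_one]
    exact integral_id_gauss

lemma sq_sum_expand (m : ℕ) (a β : Fin m → ℝ) :
    (∑ k, β k * a k) ^ 2 = ∑ j, ∑ k, (a j * a k) * (β j * β k) := by
  rw [sq, Finset.sum_mul_sum]
  exact Finset.sum_congr rfl fun j _ => Finset.sum_congr rfl fun k _ => by ring

lemma integrable_sq_sum (m : ℕ) (a : Fin m → ℝ) :
    Integrable (fun β : Fin m → ℝ => (∑ k, β k * a k) ^ 2)
      (Measure.pi fun _ : Fin m => gaussianReal 0 1) := by
  have h : Integrable (fun β : Fin m → ℝ => ∑ j, ∑ k, (a j * a k) * (β j * β k))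
      (Measure.pi fun _ : Fin m => gaussianReal 0 1) := by
    refine integrable_finset_sum _ fun j _ => integrable_finset_sum _ fun k _ => ?_
    exact (integrable_coord_mul m j k).const_mul _
  exact h.congr (ae_of_all _ fun β => (sq_sum_expand m a β).symm)

lemma integral_sq_sum (m : ℕ) (a : Fin m → ℝ) :
    ∫ β : Fin m → ℝ, (∑ k, β k * a k) ^ 2 ∂(Measure.pi fun _ : Fin m => gaussianReal 0 1)
      = ∑ k, a k ^ 2 := by
  rw [integral_congr_ae (ae_of_all _ fun β => sq_sum_expand m a β)]
  rw [integral_finset_sum _ fun j _ => integrable_finset_sum _ fun k _ =>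
    (integrable_coord_mul m j k).const_mul _]
  have : ∀ j : Fin m, ∫ β : Fin m → ℝ, ∑ k, (a j * a k) * (β j * β k)
      ∂(Measure.pi fun _ : Fin m => gaussianReal 0 1)
      = ∑ k, (a j * a k) * (if j = k then 1 else 0) := by
    intro j
    rw [integral_finset_sum _ fun k _ => (integrable_coord_mul m j k).const_mul _]
    exact Finset.sum_congr rfl fun k _ => by
      rw [MeasureTheory.integral_const_mul, integral_coord_mul]
  simp_rw [this]
  simp [sq]

lemma key_pointwise (m : ℕ) (a : Fin m → ℝ) :
    ∫⁻ β : Fin m → ℝ, ENNReal.ofReal (min ((∑ k, β k * a k) ^ 2) 1)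
        ∂(Measure.pi fun _ : Fin m => gaussianReal 0 1)
      ≤ ENNReal.ofReal (min (∑ k, a k ^ 2) 1) := by
  have hb1 : ∫⁻ β : Fin m → ℝ, ENNReal.ofReal (min ((∑ k, β k * a k) ^ 2) 1)
        ∂(Measure.pi fun _ : Fin m => gaussianReal 0 1)
      ≤ ENNReal.ofReal (∑ k, a k ^ 2) := by
    calc _ ≤ ∫⁻ β : Fin m → ℝ, ENNReal.ofReal ((∑ k, β k * a k) ^ 2)
          ∂(Measure.pi fun _ : Fin m => gaussianReal 0 1) :=
        lintegral_mono fun β => ENNReal.ofReal_le_ofReal (min_le_left _ _)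
      _ = ENNReal.ofReal (∑ k, a k ^ 2) := by
        rw [← ofReal_integral_eq_lintegral_ofReal (integrable_sq_sum m a)
          (ae_of_all _ fun β => sq_nonneg _), integral_sq_sum]
  have hb2 : ∫⁻ β : Fin m → ℝ, ENNReal.ofReal (min ((∑ k, β k * a k) ^ 2) 1)
        ∂(Measure.pi fun _ : Fin m => gaussianReal 0 1) ≤ 1 := by
    calc _ ≤ ∫⁻ _β : Fin m → ℝ, 1 ∂(Measure.pi fun _ : Fin m => gaussianReal 0 1) :=
        lintegral_mono fun β => by
          rw [show (1:ENNReal) = ENNReal.ofReal 1 by simp]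
          exact ENNReal.ofReal_le_ofReal (min_le_right _ _)
      _ = 1 := by simp
  rcases le_total (∑ k, a k ^ 2) 1 with h | h
  · rwa [min_eq_left h]
  · rw [min_eq_right h, ENNReal.ofReal_one]
    exact hb2

/-- Gaussian averaging bound: averaging `(Σ β_k c_k(x))² ∧ 1` over a standard Gaussian
vector `β` is dominated by `(Σ c_k(x)²) ∧ 1`. -/
theorem stmt11
    {X : Type*} [MeasurableSpace X] (ξ : Measure X) (m : ℕ)
    (c : X → Fin m → ℝ) (hc : Measurable c) :
    ∫⁻ β : Fin m → ℝ,
        (∫⁻ x, ENNReal.ofReal (min ((∑ k, β k * c x k) ^ 2) 1) ∂ξ)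
          ∂(Measure.pi fun _ : Fin m => gaussianReal 0 1)
      ≤ ∫⁻ x, ENNReal.ofReal (min (∑ k, (c x k) ^ 2) 1) ∂ξ := by
  set G : X → ℝ := fun x => ∑ k, (c x k) ^ 2 with hG
  have hGmeas : Measurable G :=
    Finset.measurable_sum _ fun k _ => ((measurable_pi_apply k).comp hc).pow_const 2
  set F : (Fin m → ℝ) → X → ENNReal :=
    fun β x => ENNReal.ofReal (min ((∑ k, β k * c x k) ^ 2) 1) with hF
  have hFmeas : Measurable (Function.uncurry F) := by
    have hsum : Measurable fun p : (Fin m → ℝ) × X => ∑ k, p.1 k * c p.2 k :=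
      Finset.measurable_sum _ fun k _ =>
        ((measurable_pi_apply k).comp measurable_fst).mul
          ((measurable_pi_apply k).comp (hc.comp measurable_snd))
    exact ((hsum.pow_const 2).min measurable_const).ennreal_ofReal
  have hGnonneg : ∀ x, 0 ≤ G x := fun x => Finset.sum_nonneg fun k _ => sq_nonneg _
  set S : Set X := {x | G x ≠ 0} with hS
  have hSmeas : MeasurableSet S := (hGmeas (measurableSet_singleton 0)).compl
  have hF0 : ∀ β x, x ∉ S → F β x = 0 := by
    intro β x hx
    simp only [hS, Set.mem_setOf_eq, not_not] at hx
    have hc0 : ∀ k, c x k = 0 := by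
      intro k
      have h := (Finset.sum_eq_zero_iff_of_nonneg (fun k _ => sq_nonneg (c x k))).mp hx
        k (Finset.mem_univ k)
      exact pow_eq_zero_iff (by norm_num) |>.mp h
    simp [hF, hc0]
  have hG0 : ∀ x, x ∉ S → ENNReal.ofReal (min (G x) 1) = 0 := by
    intro x hx
    simp only [hS, Set.mem_setOf_eq, not_not] at hx
    simp [hx]
  by_cases htop : ∫⁻ x, ENNReal.ofReal (min (G x) 1) ∂ξ = ⊤
  · rw [htop]; exact le_top
  -- σ-finiteness of ξ restricted to S
  have hsf : SigmaFinite (ξ.restrict S) := by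
    set A : ℕ → Set X := fun n =>
      {x | ENNReal.ofReal (1/(n+1)) ≤ ENNReal.ofReal (min (G x) 1)} ∪ Sᶜ with hA
    refine Measure.sigmaFinite_of_countable (Set.countable_range A) ?_ ?_
    · rintro s ⟨n, rfl⟩
      have hε : (ENNReal.ofReal (1/(n+1)) : ENNReal) ≠ 0 := by
        simp only [ne_eq, ENNReal.ofReal_eq_zero, not_le]
        positivity
      have hmul := mul_meas_ge_le_lintegral₀
        (f := fun x => ENNReal.ofReal (min (G x) 1))
        ((hGmeas.min measurable_const).ennreal_ofReal).aemeasurable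
        (μ := ξ) (ENNReal.ofReal (1/(n+1)))
      have hle : ξ.restrict S (A n)
          ≤ ξ {x | ENNReal.ofReal (1/(n+1)) ≤ ENNReal.ofReal (min (G x) 1)} := by
        rw [Measure.restrict_apply' hSmeas]
        refine measure_mono ?_
        intro x hx
        rcases hx with ⟨hx1 | hx2, hxS⟩
        · exact hx1
        · exact absurd hxS hx2
      refine hle.trans_lt ?_
      have h2 : ξ {x | ENNReal.ofReal (1/(n+1)) ≤ ENNReal.ofReal (min (G x) 1)}
          ≤ (ENNReal.ofReal (1/(n+1)))⁻¹ * ∫⁻ x, ENNReal.ofReal (min (G x) 1) ∂ξ := by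
        rw [← one_mul (ξ _), ← ENNReal.inv_mul_cancel hε ENNReal.ofReal_ne_top, mul_assoc]
        exact mul_le_mul_right hmul _
      refine h2.trans_lt (ENNReal.mul_lt_top ?_ ?_)
      · exact ENNReal.inv_lt_top.mpr (pos_iff_ne_zero.mpr hε)
      · exact lt_top_iff_ne_top.mpr htop
    · rw [Set.sUnion_range]
      ext x
      simp only [Set.mem_iUnion, Set.mem_univ, iff_true]
      by_cases hx : x ∈ S
      · have hpos : 0 < min (G x) 1 := by
          rcases lt_or_eq_of_le (hGnonneg x) with h | h
          · exact lt_min h one_pos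
          · exact absurd h.symm hx
        obtain ⟨n, hn⟩ := exists_nat_one_div_lt hpos
        exact ⟨n, Or.inl (ENNReal.ofReal_le_ofReal hn.le)⟩
      · exact ⟨0, Or.inr hx⟩
  -- reduce to the restricted measure
  have hres : ∀ β, ∫⁻ x, F β x ∂ξ = ∫⁻ x, F β x ∂(ξ.restrict S) := by
    intro β
    rw [← lintegral_indicator hSmeas]
    refine lintegral_congr fun x => ?_
    by_cases hx : x ∈ S
    · rw [Set.indicator_of_mem hx]
    · rw [Set.indicator_of_notMem hx, hF0 β x hx]
  calc ∫⁻ β : Fin m → ℝ, (∫⁻ x, F β x ∂ξ) ∂(Measure.pi fun _ : Fin m => gaussianReal 0 1)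
      = ∫⁻ β : Fin m → ℝ, (∫⁻ x, F β x ∂(ξ.restrict S))
          ∂(Measure.pi fun _ : Fin m => gaussianReal 0 1) := by
        exact lintegral_congr fun β => hres β
    _ = ∫⁻ x, (∫⁻ β : Fin m → ℝ, F β x ∂(Measure.pi fun _ : Fin m => gaussianReal 0 1))
          ∂(ξ.restrict S) := by
        exact lintegral_lintegral_swap hFmeas.aemeasurable
    _ ≤ ∫⁻ x, ENNReal.ofReal (min (G x) 1) ∂(ξ.restrict S) :=
        lintegral_mono fun x => key_pointwise m (c x)
    _ ≤ ∫⁻ x, ENNReal.ofReal (min (G x) 1) ∂ξ := setLIntegral_le_lintegral _ _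
end

section
/- Let U be a separable real Banach space and let σ be a Borel measure on U such that ∫_U (⟨u,u*⟩² ∧ 1) σ(du) < ∞ for every continuous linear functional u* on U, and such that the map u* ↦ ∫_U (1 − cos⟨u,u*⟩) σ(du) is continuous at 0 with respect to the dual norm on U*. Then for every ε > 0 there exists δ > 0 such that sup_{‖u*‖ ≤ δ} ∫_U (⟨u,u*⟩² ∧ 1) σ(du) ≤ ε. -/
open MeasureTheory

-- pointwise lower bound for small arguments
lemma aux_cos_lb {y : ℝ} (h0 : 0 ≤ y) (h1 : y ≤ 1) :
    225/512 * y^2 ≤ 1 - Real.cos y := by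
  rcases eq_or_lt_of_le h0 with h|h
  · simp [← h]
  · have hs := Real.sin_gt_sub_cube (by linarith : 0 < y/2)
    have hsq : Real.sin (y/2) ^ 2 = 1/2 - Real.cos (2 * (y/2)) / 2 :=
      Real.sin_sq_eq_half_sub (y/2)
    have h2 : (2:ℝ) * (y/2) = y := by ring
    rw [h2] at hsq
    have hy2 : y^2 ≤ 1 := by nlinarith
    have hy3 : y^3 ≤ y := by nlinarith [mul_nonneg h0 (sub_nonneg.mpr hy2)]
    have h15 : (15/32) * y ≤ Real.sin (y/2) := by nlinarith
    nlinarith [h15, hsq, mul_le_mul h15 h15 (by positivity) (le_trans (by positivity) h15)]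

lemma aux_sin_le {x : ℝ} (hx : 1 ≤ x) : Real.sin x ≤ 85/96 * x := by
  have hb := Real.sin_bound (by norm_num : |(1:ℝ)| ≤ 1)
  have hb' := abs_le.mp hb
  have hsin1 : Real.sin 1 ≤ 85/96 := by norm_num at hb' ⊢; linarith [hb'.2]
  have hc := Real.cos_bound (by norm_num : |(1:ℝ)| ≤ 1)
  have hc' := abs_le.mp hc
  have hcos1 : Real.cos 1 ≤ 53/96 := by norm_num at hc' ⊢; linarith [hc'.2]
  have hpi : (3:ℝ) < Real.pi := Real.pi_gt_three
  have hsin1' : 0 ≤ Real.sin 1 :=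
    Real.sin_nonneg_of_nonneg_of_le_pi (by norm_num) (by linarith)
  have hcos1' : 0 ≤ Real.cos 1 :=
    Real.cos_nonneg_of_mem_Icc ⟨by linarith, by linarith⟩
  have hx' : x = 1 + (x - 1) := by ring
  rw [hx', Real.sin_add]
  have hc1 : Real.cos (x - 1) ≤ 1 := Real.cos_le_one _
  have hs1 : Real.sin (x - 1) ≤ x - 1 := Real.sin_le (by linarith)
  nlinarith

lemma aux_int_eq {x : ℝ} (hx : x ≠ 0) :
    ∫ t in (0:ℝ)..1, (1 - Real.cos (t * x)) = 1 - Real.sin x / x := by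
  have hcont : Continuous fun t : ℝ => Real.cos (t * x) :=
    Real.continuous_cos.comp (continuous_id.mul continuous_const)
  rw [intervalIntegral.integral_sub (intervalIntegrable_const)
    (hcont.intervalIntegrable 0 1)]
  have h := intervalIntegral.mul_integral_comp_mul_right (a := (0:ℝ)) (b := 1)
    (c := x) (f := Real.cos)
  rw [zero_mul, one_mul, integral_cos, Real.sin_zero, sub_zero] at h
  have hx' : ∫ t in (0:ℝ)..1, Real.cos (t * x) = Real.sin x / x := by
    rw [eq_div_iff hx, mul_comm]
    exact h
  rw [hx']
  simp


lemma aux_key (x : ℝ) :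
    min (x^2) 1 ≤ 9 * ∫ t in (0:ℝ)..1, (1 - Real.cos (t * x)) := by
  suffices h : ∀ y : ℝ, 0 ≤ y → min (y^2) 1 ≤ 9 * ∫ t in (0:ℝ)..1, (1 - Real.cos (t * y)) by
    rcases le_total 0 x with hx|hx
    · exact h x hx
    · have := h (-x) (by linarith)
      simpa [mul_neg, Real.cos_neg] using this
  intro y hy
  rcases eq_or_lt_of_le hy with h0|h0
  · simp [← h0]
  rcases le_total y 1 with h1|h1
  · have hmin : min (y^2) 1 = y^2 := min_eq_left (by nlinarith)
    rw [hmin]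
    have hint1 : IntervalIntegrable (fun t => 225/512 * (t*y)^2) volume 0 1 :=
      (Continuous.intervalIntegrable (by continuity) 0 1)
    have hint2 : IntervalIntegrable (fun t => 1 - Real.cos (t*y)) volume 0 1 :=
      (Continuous.intervalIntegrable (by continuity) 0 1)
    have hle : ∫ t in (0:ℝ)..1, (225/512 * (t*y)^2) ≤
        ∫ t in (0:ℝ)..1, (1 - Real.cos (t*y)) := by
      apply intervalIntegral.integral_mono_on zero_le_one hint1 hint2
      intro t ht
      rw [Set.mem_Icc] at ht
      exact aux_cos_lb (mul_nonneg ht.1 hy) (by nlinarith [ht.1, ht.2])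
    have hval : ∫ t in (0:ℝ)..1, (225/512 * (t*y)^2) = 75/512 * y^2 := by
      have heq : (fun t : ℝ => 225/512 * (t*y)^2) = (fun t : ℝ => (225/512 * y^2) * t^2) := by
        funext t; ring
      rw [heq, intervalIntegral.integral_const_mul, integral_pow]
      norm_num; ring
    nlinarith [hle, sq_nonneg y]
  · have hmin : min (y^2) 1 = 1 := min_eq_right (by nlinarith)
    rw [hmin, aux_int_eq (by linarith : y ≠ 0)]
    have hs := aux_sin_le h1
    have hq : Real.sin y / y ≤ 85/96 := (div_le_iff₀ h0).mpr (by linarith)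
    linarith

/-- Uniform smallness of `∫ (⟨u,u*⟩² ∧ 1) σ(du)` over small balls of the dual space,
given continuity at `0` of the symbol `u* ↦ ∫ (1 − cos⟨u,u*⟩) σ(du)`. -/
theorem stmt13
    (U : Type*) [NormedAddCommGroup U] [NormedSpace ℝ U] [CompleteSpace U]
    [TopologicalSpace.SeparableSpace U] [MeasurableSpace U] [BorelSpace U]
    (σ : Measure U)
    (h1 : ∀ w : U →L[ℝ] ℝ, Integrable (fun u => min ((w u) ^ 2) 1) σ)
    (h2 : ContinuousAt (fun w : U →L[ℝ] ℝ => ∫ u, (1 - Real.cos (w u)) ∂σ) 0) :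
    ∀ ε : ℝ, 0 < ε → ∃ δ : ℝ, 0 < δ ∧
      ∀ w : U →L[ℝ] ℝ, ‖w‖ ≤ δ → ∫ u, min ((w u) ^ 2) 1 ∂σ ≤ ε := by
  intro ε hε
  rw [Metric.continuousAt_iff] at h2
  obtain ⟨δ₀, hδ₀, hδ⟩ := h2 (ε/9) (by positivity)
  refine ⟨δ₀/2, by positivity, ?_⟩
  intro w hw
  -- the value at 0 is 0
  have hF0 : ∫ u, (1 - Real.cos ((0 : U →L[ℝ] ℝ) u)) ∂σ = 0 := by simp
  -- small symbol on the segment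
  have hFb : ∀ t : ℝ, t ∈ Set.Ioc (0:ℝ) 1 →
      ∫ u, (1 - Real.cos (t * w u)) ∂σ ≤ ε/9 := by
    intro t ht
    have hnorm : dist (t • w) (0 : U →L[ℝ] ℝ) < δ₀ := by
      rw [dist_zero_right]
      have hle := norm_smul_le t w
      have habs : ‖t‖ ≤ 1 := by
        rw [Real.norm_eq_abs, abs_of_pos ht.1]; exact ht.2
      calc ‖t • w‖ ≤ ‖t‖ * ‖w‖ := hle
        _ ≤ 1 * (δ₀/2) := by
            apply mul_le_mul habs hw (norm_nonneg w) zero_le_one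
        _ < δ₀ := by linarith
    have := hδ hnorm
    rw [Real.dist_eq] at this
    have heq : (∫ u, (1 - Real.cos ((t • w) u)) ∂σ) = ∫ u, (1 - Real.cos (t * w u)) ∂σ := by
      simp only [ContinuousLinearMap.coe_smul', Pi.smul_apply, smul_eq_mul]
    rw [hF0, sub_zero, heq] at this
    exact (abs_le.mp this.le).2
  -- restrict to the set where w u ≠ 0
  set s : Set U := {u | w u ≠ 0} with hs_def
  have hs : MeasurableSet s := by
    have heqs : s = {u : U | w u = 0}ᶜ := by ext u; simp [hs_def]
    rw [heqs]
    exact ((isClosed_eq w.continuous continuous_const).measurableSet).compl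
  set σ' := σ.restrict s with hσ'
  -- sigma-finiteness of the restricted measure
  have hsig : SigmaFinite σ' := by
    refine ⟨⟨⟨fun n => {u | ((n:ℝ)+1)⁻¹ < |w u|} ∪ {u | w u = 0},
      fun n => trivial, fun n => ?_, ?_⟩⟩⟩
    · have hTn : MeasurableSet ({u : U | ((n:ℝ)+1)⁻¹ < |w u|} ∪ {u | w u = 0}) := by
        refine MeasurableSet.union ?_ ?_
        · exact (isOpen_lt continuous_const w.continuous.abs).measurableSet
        · exact (isClosed_eq w.continuous continuous_const).measurableSet
      rw [hσ', Measure.restrict_apply hTn]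
      have hsub : ({u : U | ((n:ℝ)+1)⁻¹ < |w u|} ∪ {u | w u = 0}) ∩ s ⊆
          {u : U | min ((((n:ℝ)+1)⁻¹)^2) 1 ≤ min ((w u)^2) 1} := by
        rintro u ⟨hu1 | hu1, hu2⟩
        · have h0 : (0:ℝ) ≤ ((n:ℝ)+1)⁻¹ := by positivity
          have hu1' : ((n:ℝ)+1)⁻¹ ≤ |w u| := le_of_lt hu1
          have : (((n:ℝ)+1)⁻¹)^2 ≤ (w u)^2 := by
            have hp := pow_le_pow_left₀ h0 hu1' 2
            rwa [sq_abs] at hp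
          exact le_trans (min_le_min this le_rfl) le_rfl
        · exact absurd hu1 hu2
      calc σ (({u : U | ((n:ℝ)+1)⁻¹ < |w u|} ∪ {u | w u = 0}) ∩ s)
          ≤ σ {u : U | min ((((n:ℝ)+1)⁻¹)^2) 1 ≤ min ((w u)^2) 1} := measure_mono hsub
        _ < ⊤ := (h1 w).measure_ge_lt_top (by positivity)
    · ext u
      simp only [Set.mem_iUnion, Set.mem_union, Set.mem_setOf_eq, Set.mem_univ, iff_true]
      by_cases h : w u = 0
      · exact ⟨0, Or.inr h⟩
      · have h0 : 0 < |w u| := abs_pos.mpr h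
        obtain ⟨n, hn⟩ := exists_nat_gt (|w u|)⁻¹
        refine ⟨n, Or.inl ?_⟩
        have h1 : (|w u|)⁻¹ < (n:ℝ) + 1 := by linarith
        calc ((n:ℝ)+1)⁻¹ < ((|w u|)⁻¹)⁻¹ := by
              apply inv_strictAnti₀ (by positivity) h1
          _ = |w u| := inv_inv _
  -- transferring integrals to σ'
  have hmin_eq : ∫ u, min ((w u)^2) 1 ∂σ' = ∫ u, min ((w u)^2) 1 ∂σ :=
    setIntegral_eq_integral_of_forall_compl_eq_zero (fun u hu => by
      simp only [hs_def, Set.mem_setOf_eq, not_not] at hu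
      simp [hu])
  have hF_eq : ∀ t : ℝ, ∫ u, (1 - Real.cos (t * w u)) ∂σ' = ∫ u, (1 - Real.cos (t * w u)) ∂σ :=
    fun t => setIntegral_eq_integral_of_forall_compl_eq_zero (fun u hu => by
      simp only [hs_def, Set.mem_setOf_eq, not_not] at hu
      simp [hu])
  -- product integrability
  set ν := volume.restrict (Set.Ioc (0:ℝ) 1) with hν
  haveI : IsFiniteMeasure ν := by
    constructor
    rw [hν, Measure.restrict_apply_univ, Real.volume_Ioc]
    simp
  have hcont : Continuous (Function.uncurry fun (u : U) (t : ℝ) => 1 - Real.cos (t * w u)) := by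
    apply continuous_const.sub
    exact Real.continuous_cos.comp (continuous_snd.mul (w.continuous.comp continuous_fst))
  have hae2 : ∀ᵐ p : U × ℝ ∂(σ'.prod ν), p.2 ∈ Set.Ioc (0:ℝ) 1 := by
    rw [ae_iff]
    have hset : {p : U × ℝ | ¬ p.2 ∈ Set.Ioc (0:ℝ) 1} = Set.univ ×ˢ (Set.Ioc (0:ℝ) 1)ᶜ := by
      ext p; simp
    rw [hset, Measure.prod_prod]
    have : ν (Set.Ioc (0:ℝ) 1)ᶜ = 0 := by
      rw [hν, Measure.restrict_apply measurableSet_Ioc.compl]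
      simp
    rw [this, mul_zero]
  have hint : Integrable (Function.uncurry fun (u : U) (t : ℝ) => 1 - Real.cos (t * w u))
      (σ'.prod ν) := by
    have hbound : Integrable (fun p : U × ℝ => (2 * min ((w p.1)^2) 1) * 1) (σ'.prod ν) :=
      Integrable.mul_prod (((h1 w).restrict (s := s)).const_mul 2) (integrable_const 1)
    refine Integrable.mono' hbound hcont.aestronglyMeasurable ?_
    filter_upwards [hae2] with p hp
    have hcos1 : Real.cos (p.2 * w p.1) ≤ 1 := Real.cos_le_one _
    have hcos2 : -1 ≤ Real.cos (p.2 * w p.1) := Real.neg_one_le_cos _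
    rw [Function.uncurry, Real.norm_eq_abs, abs_of_nonneg (by linarith)]
    have hcb : 1 - (p.2 * w p.1)^2/2 ≤ Real.cos (p.2 * w p.1) :=
      Real.one_sub_sq_div_two_le_cos
    have ht2 : p.2^2 ≤ 1 := by nlinarith [hp.1, hp.2]
    rcases le_total ((w p.1)^2) 1 with hc|hc
    · rw [min_eq_left hc]
      nlinarith [sq_nonneg (w p.1), sq_nonneg p.2, mul_nonneg (sq_nonneg p.2) (sq_nonneg (w p.1))]
    · rw [min_eq_right hc]
      nlinarith
  -- Fubini
  have hswap := integral_integral_swap hint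
  have h_inner_int : Integrable (fun u => ∫ t, (1 - Real.cos (t * w u)) ∂ν) σ' :=
    hint.integral_prod_left
  have h_outer_int : Integrable (fun t => ∫ u, (1 - Real.cos (t * w u)) ∂σ') ν :=
    hint.integral_prod_right
  -- the chain of inequalities
  have step1 : ∫ u, min ((w u)^2) 1 ∂σ' ≤
      ∫ u, 9 * ∫ t, (1 - Real.cos (t * w u)) ∂ν ∂σ' := by
    apply integral_mono ((h1 w).restrict (s := s)) (h_inner_int.const_mul 9)
    intro u
    have := aux_key (w u)
    rwa [intervalIntegral.integral_of_le zero_le_one] at this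
  have step2 : ∫ u, 9 * ∫ t, (1 - Real.cos (t * w u)) ∂ν ∂σ' =
      9 * ∫ u, ∫ t, (1 - Real.cos (t * w u)) ∂ν ∂σ' := integral_const_mul 9 _
  have step4 : ∫ t, ∫ u, (1 - Real.cos (t * w u)) ∂σ' ∂ν ≤ ε/9 := by
    have hmono : ∫ t, ∫ u, (1 - Real.cos (t * w u)) ∂σ' ∂ν ≤ ∫ _t, ε/9 ∂ν := by
      apply integral_mono_ae h_outer_int (integrable_const _)
      filter_upwards [ae_restrict_mem measurableSet_Ioc] with t ht
      rw [hF_eq t]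
      exact hFb t ht
    have hconst : ∫ _t, ε/9 ∂ν = ε/9 := by
      rw [integral_const]
      rw [hν, measureReal_restrict_apply_univ, measureReal_def, Real.volume_Ioc]
      norm_num
    linarith
  calc ∫ u, min ((w u)^2) 1 ∂σ = ∫ u, min ((w u)^2) 1 ∂σ' := hmin_eq.symm
    _ ≤ ∫ u, 9 * ∫ t, (1 - Real.cos (t * w u)) ∂ν ∂σ' := step1
    _ = 9 * ∫ u, ∫ t, (1 - Real.cos (t * w u)) ∂ν ∂σ' := step2
    _ = 9 * ∫ t, ∫ u, (1 - Real.cos (t * w u)) ∂σ' ∂ν := by rw [hswap]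
    _ ≤ 9 * (ε/9) := by linarith [step4]
    _ = ε := by ring
end
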